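/- Let T be a tree with diametrical path v₀,...,v_d, and for each i let T_i be the subtree induced by vertices joined to v_i by paths internally disjoint from the path. If for some i ∈ {2,...,d−2}, T_i has an independent set of cardinality 3 that dominates T_i but does not contain v_i, then Γ_b(T) > diam(T). -/

import Mathlib

namespace AJC

variable {V : Type*}

/-- Eccentricity of a vertex: max distance to any vertex. -/
noncomputable def ecc [Fintype V] (G : SimpleGraph V) (v : V) : ℕ :=
  Finset.univ.sup (fun u => G.dist v u)

/-- Diameter: max eccentricity. -/
noncomputable def diam [Fintype V] (G : SimpleGraph V) : ℕ :=
  Finset.univ.sup (fun v => ecc G v)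

/-- Radius: minimum eccentricity. -/
noncomputable def rad [Fintype V] (G : SimpleGraph V) : ℕ :=
  sInf (Set.range (ecc G))

/-- A broadcast on `G`. -/
def IsBroadcast [Fintype V] (G : SimpleGraph V) (f : V → ℕ) : Prop :=
  ∀ v, f v ≤ ecc G v

/-- `u` hears the broadcast `f` (is dominated by `f`). -/
def Hears (G : SimpleGraph V) (f : V → ℕ) (u : V) : Prop :=
  ∃ v, 1 ≤ f v ∧ G.dist v u ≤ f v

/-- A dominating broadcast. -/
def IsDomBroadcast [Fintype V] (G : SimpleGraph V) (f : V → ℕ) : Prop :=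
  IsBroadcast G f ∧ ∀ u, Hears G f u

/-- A minimal dominating broadcast: no strictly smaller broadcast is dominating. -/
def IsMinDomBroadcast [Fintype V] (G : SimpleGraph V) (f : V → ℕ) : Prop :=
  IsDomBroadcast G f ∧ ∀ f' : V → ℕ, f' < f → ¬ IsDomBroadcast G f'

/-- The cost of a broadcast. -/
def cost [Fintype V] (f : V → ℕ) : ℕ := ∑ v, f v

/-- The upper broadcast domination number `Γ_b`. -/
noncomputable def upperBroadcastNum [Fintype V] (G : SimpleGraph V) : ℕ :=
  sSup {n | ∃ f : V → ℕ, IsMinDomBroadcast G f ∧ cost f = n}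

/-- The broadcast domination number `γ_b`. -/
noncomputable def broadcastNum [Fintype V] (G : SimpleGraph V) : ℕ :=
  sInf {n | ∃ f : V → ℕ, IsDomBroadcast G f ∧ cost f = n}

/-- The `f`-neighbourhood of `v`. -/
def Nf (G : SimpleGraph V) (f : V → ℕ) (v : V) : Set V := {u | G.dist v u ≤ f v}

/-- The `f`-boundary of `v`. -/
def Bf (G : SimpleGraph V) (f : V → ℕ) (v : V) : Set V := {u | G.dist v u = f v}

/-- The `f`-private neighbourhood of `v`. -/
def PN (G : SimpleGraph V) (f : V → ℕ) (v : V) : Set V :=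
  {u | G.dist v u ≤ f v ∧ ∀ w, w ≠ v → 1 ≤ f w → ¬ G.dist w u ≤ f w}

/-- The `f`-private boundary of `v`: vertices in `N_f[v]` not dominated once the
broadcast at `v` is decreased by one. -/
def PB [DecidableEq V] (G : SimpleGraph V) (f : V → ℕ) (v : V) : Set V :=
  {u | G.dist v u ≤ f v ∧ ¬ Hears G (Function.update f v (f v - 1)) u}

/-- A dominating set of vertices. -/
def IsDomSet (G : SimpleGraph V) (S : Finset V) : Prop :=
  ∀ v, v ∈ S ∨ ∃ u ∈ S, G.Adj u v

/-- A minimal dominating set. -/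
def IsMinDomSet (G : SimpleGraph V) (S : Finset V) : Prop :=
  IsDomSet G S ∧ ∀ T ⊂ S, ¬ IsDomSet G T

/-- An independent set of vertices. -/
def IsIndepSet (G : SimpleGraph V) (S : Finset V) : Prop :=
  ∀ u ∈ S, ∀ w ∈ S, u ≠ w → ¬ G.Adj u w

/-- The upper domination number `Γ`. -/
noncomputable def upperDomNum [Fintype V] (G : SimpleGraph V) : ℕ :=
  sSup {n | ∃ S : Finset V, IsMinDomSet G S ∧ S.card = n}

/-- The domination number `γ`. -/
noncomputable def domNum [Fintype V] (G : SimpleGraph V) : ℕ :=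
  sInf {n | ∃ S : Finset V, IsDomSet G S ∧ S.card = n}

/-- The independence number `α`. -/
noncomputable def indepNum [Fintype V] (G : SimpleGraph V) : ℕ :=
  sSup {n | ∃ S : Finset V, IsIndepSet G S ∧ S.card = n}

/-- Given a diametrical path `v 0, …, v d` of a tree, `sideTree G d v i` is the set of
vertices connected to `v i` by a path internally disjoint from the diametrical path. -/
def sideTree (G : SimpleGraph V) (d : ℕ) (v : ℕ → V) (i : ℕ) : Set V :=
  {x | ∃ p : G.Walk x (v i), p.IsPath ∧ ∀ y ∈ p.support, y ≠ v i → ∀ j ≤ d, v j ≠ y}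

/-- The diameter of the subtree `T_i`. -/
noncomputable def sideDiam (G : SimpleGraph V) (d : ℕ) (v : ℕ → V) (i : ℕ) : ℕ :=
  sSup {n | ∃ x ∈ sideTree G d v i, ∃ y ∈ sideTree G d v i, G.dist x y = n}

/-- The eccentricity of a vertex `x` within the subtree `T_i`. -/
noncomputable def sideEcc (G : SimpleGraph V) (d : ℕ) (v : ℕ → V) (i : ℕ) (x : V) : ℕ :=
  sSup {n | ∃ y ∈ sideTree G d v i, G.dist x y = n}

/-- A leaf of `G`. -/
def IsLeaf [Fintype V] (G : SimpleGraph V) [DecidableRel G.Adj] (x : V) : Prop :=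
  G.degree x = 1

/-- A stem: a vertex adjacent to a leaf. -/
def IsStem [Fintype V] (G : SimpleGraph V) [DecidableRel G.Adj] (x : V) : Prop :=
  ∃ l, IsLeaf G l ∧ G.Adj x l

/-- A strong stem: a vertex adjacent to at least two leaves. -/
def IsStrongStem [Fintype V] (G : SimpleGraph V) [DecidableRel G.Adj] (x : V) : Prop :=
  ∃ l₁ l₂, l₁ ≠ l₂ ∧ IsLeaf G l₁ ∧ IsLeaf G l₂ ∧ G.Adj x l₁ ∧ G.Adj x l₂


-- auxiliary lemmas
lemma dist_le_ecc [Fintype V] (G : SimpleGraph V) (x u : V) : G.dist x u ≤ ecc G x :=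
  Finset.le_sup (Finset.mem_univ u)

lemma tree_dist_of_isPath {G : SimpleGraph V} (hT : G.IsTree) {x y : V} (p : G.Walk x y)
    (hp : p.IsPath) : G.dist x y = p.length := by
  obtain ⟨q, hq, hql⟩ := SimpleGraph.Reachable.exists_path_of_dist ⟨p⟩
  have heq : (⟨p, hp⟩ : G.Path x y) = ⟨q, hq⟩ := hT.IsAcyclic.path_unique _ _
  have : p = q := by simpa using congrArg Subtype.val heq
  rw [this, hql]

lemma append_isPath {G : SimpleGraph V} {a b c : V} (w : G.Walk a b) (p : G.Walk c b)
    (hw : w.IsPath) (hp : p.IsPath)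
    (hdisj : ∀ y ∈ w.support, y ∈ p.support → y = b) :
    (w.append p.reverse).IsPath := by
  rw [SimpleGraph.Walk.isPath_def, SimpleGraph.Walk.support_append, List.nodup_append]
  refine ⟨hw.support_nodup, ?_, ?_⟩
  · exact (((SimpleGraph.Walk.isPath_reverse_iff p).2 hp).support_nodup).tail
  · intro y hyw y' hyt hyy'
    rw [← hyy'] at hyt
    have hyrev : y ∈ p.reverse.support := List.mem_of_mem_tail hyt
    have hymem : y ∈ p.support := by
      rwa [SimpleGraph.Walk.support_reverse, List.mem_reverse] at hyrev
    have hyb : y = b := hdisj y hyw hymem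
    subst hyb
    have hnodup := ((SimpleGraph.Walk.isPath_reverse_iff p).2 hp).support_nodup
    rw [SimpleGraph.Walk.support_eq_cons] at hnodup
    exact (List.nodup_cons.mp hnodup).1 hyt

theorem stmt8 {V : Type*} [Fintype V] [DecidableEq V] (G : SimpleGraph V)
    [DecidableRel G.Adj] (hT : G.IsTree) (d : ℕ) (v : ℕ → V)
    (hdiam : diam G = d)
    (hadj : ∀ i < d, G.Adj (v i) (v (i + 1)))
    (hinj : ∀ i ≤ d, ∀ j ≤ d, v i = v j → i = j)
    (i : ℕ) (hi1 : 2 ≤ i) (hi2 : i ≤ d - 2)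
    (S : Finset V) (hcard : S.card = 3) (hind : IsIndepSet G S)
    (hsub : ↑S ⊆ sideTree G d v i) (hvi : v i ∉ S)
    (hdom : ∀ x ∈ sideTree G d v i, x ∈ S ∨ ∃ s ∈ S, G.Adj s x) :
    diam G < upperBroadcastNum G := by
  classical
  have hd4 : 4 ≤ d := by omega
  have hi2' : i + 2 ≤ d := by omega
  have hconn : G.Connected := hT.isConnected
  -- walks along the path
  have hVpath : ∀ k a, a + k ≤ d → ∃ w : G.Walk (v a) (v (a + k)), w.length = k ∧ w.IsPath ∧
      ∀ y ∈ w.support, ∃ j, a ≤ j ∧ j ≤ a + k ∧ v j = y := by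
    intro k
    induction k with
    | zero =>
      intro a _
      exact ⟨SimpleGraph.Walk.nil, rfl, SimpleGraph.Walk.IsPath.nil,
        fun y hy => ⟨a, le_rfl, le_rfl, by simpa using (SimpleGraph.Walk.mem_support_nil_iff.mp hy).symm⟩⟩
    | succ k ih =>
      intro a ha
      obtain ⟨w, hl, hp, hs⟩ := ih (a + 1) (by omega)
      have hadj' : G.Adj (v a) (v (a + 1)) := hadj a (by omega)
      have hcast : a + 1 + k = a + (k + 1) := by omega
      refine ⟨(SimpleGraph.Walk.cons hadj' w).copy rfl (by rw [hcast]), ?_, ?_, ?_⟩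
      · simp [hl]
      · rw [SimpleGraph.Walk.isPath_copy]
        refine (SimpleGraph.Walk.cons_isPath_iff _ _).2 ⟨hp, fun hmem => ?_⟩
        obtain ⟨j, hj1, hj2, hj3⟩ := hs _ hmem
        have := hinj j (by omega) a (by omega) hj3
        omega
      · intro y hy
        rw [SimpleGraph.Walk.support_copy, SimpleGraph.Walk.support_cons] at hy
        rcases List.mem_cons.mp hy with h | h
        · exact ⟨a, le_rfl, by omega, h.symm⟩
        · obtain ⟨j, hj1, hj2, hj3⟩ := hs _ h
          exact ⟨j, by omega, by omega, hj3⟩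
  have hseg : ∀ a b, a ≤ b → b ≤ d → ∃ w : G.Walk (v a) (v b), w.length = b - a ∧ w.IsPath ∧
      ∀ y ∈ w.support, ∃ j, a ≤ j ∧ j ≤ b ∧ v j = y := by
    intro a b hab hbd
    obtain ⟨w, hl, hp, hs⟩ := hVpath (b - a) a (by omega)
    have hcast : a + (b - a) = b := by omega
    refine ⟨w.copy rfl (by rw [hcast]), by simp [hl], by simp [hp], ?_⟩
    intro y hy
    rw [SimpleGraph.Walk.support_copy] at hy
    obtain ⟨j, hj1, hj2, hj3⟩ := hs y hy
    exact ⟨j, hj1, by omega, hj3⟩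
  have hdistv : ∀ a b, a ≤ b → b ≤ d → G.dist (v a) (v b) = b - a := by
    intro a b hab hbd
    obtain ⟨w, hl, hp, -⟩ := hseg a b hab hbd
    rw [tree_dist_of_isPath hT w hp, hl]
  -- facts about S
  have hSpath : ∀ x ∈ S, ∃ p : G.Walk x (v i), p.IsPath ∧
      (∀ y ∈ p.support, y ≠ v i → ∀ j ≤ d, v j ≠ y) ∧ 1 ≤ p.length := by
    intro x hx
    obtain ⟨p, hp, hcond⟩ := hsub hx
    refine ⟨p, hp, hcond, ?_⟩
    rcases Nat.eq_zero_or_pos p.length with h0 | h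
    · exact absurd (SimpleGraph.Walk.eq_of_length_eq_zero h0) (fun h => hvi (h ▸ hx))
    · exact h
  have hSnotpath : ∀ x ∈ S, ∀ j ≤ d, v j ≠ x := by
    intro x hx j hj
    obtain ⟨p, hp, hcond, -⟩ := hSpath x hx
    exact hcond x p.start_mem_support (fun h => hvi (h ▸ hx)) j hj
  -- distance from a path vertex to an S vertex via concatenation
  have happend : ∀ x ∈ S, ∀ (p : G.Walk x (v i)), p.IsPath →
      (∀ y ∈ p.support, y ≠ v i → ∀ j ≤ d, v j ≠ y) →
      ∀ (m : ℕ) (w : G.Walk (v m) (v i)), w.IsPath →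
      (∀ y ∈ w.support, ∃ j, j ≤ d ∧ v j = y) →
      G.dist (v m) x = w.length + p.length := by
    intro x hx p hp hcond m w hw hwsup
    have hq : (w.append p.reverse).IsPath := by
      refine append_isPath w p hw hp ?_
      intro y hyw hyp
      by_contra hyne
      obtain ⟨j, hj, hjy⟩ := hwsup y hyw
      exact hcond y hyp hyne j hj hjy
    have := tree_dist_of_isPath hT _ hq
    rwa [SimpleGraph.Walk.length_append, SimpleGraph.Walk.length_reverse] at this
  have hdistS0 : ∀ x ∈ S, i + 1 ≤ G.dist (v 0) x := by
    intro x hx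
    obtain ⟨p, hp, hcond, hplen⟩ := hSpath x hx
    obtain ⟨w, hwl, hwp, hws⟩ := hseg 0 i (by omega) (by omega)
    have hdd := happend x hx p hp hcond 0 w hwp
      (fun y hy => by obtain ⟨j, _, hj2, hj3⟩ := hws y hy; exact ⟨j, by omega, hj3⟩)
    omega
  have hdistSd : ∀ x ∈ S, (d - i) + 1 ≤ G.dist (v d) x := by
    intro x hx
    obtain ⟨p, hp, hcond, hplen⟩ := hSpath x hx
    obtain ⟨w, hwl, hwp, hws⟩ := hseg i d (by omega) (by omega)
    have hwp' : w.reverse.IsPath := (SimpleGraph.Walk.isPath_reverse_iff w).2 hwp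
    have hdd := happend x hx p hp hcond d w.reverse hwp'
      (fun y hy => by
        rw [SimpleGraph.Walk.support_reverse, List.mem_reverse] at hy
        obtain ⟨j, _, hj2, hj3⟩ := hws y hy; exact ⟨j, by omega, hj3⟩)
    rw [SimpleGraph.Walk.length_reverse] at hdd
    omega
  have hSfar : ∀ x ∈ S, ∀ m ≤ d, G.dist x (v m) ≤ 1 → m = i := by
    intro x hx m hm hle
    by_contra hne
    have hxne : x ≠ v m := fun h => hSnotpath x hx m hm h.symm
    have h0 : G.dist x (v m) ≠ 0 := fun h => hxne (hconn.dist_eq_zero_iff.1 h)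
    obtain ⟨p, hp, hcond, hplen⟩ := hSpath x hx
    rcases le_or_gt m i with hmi | hmi
    · obtain ⟨w, hwl, hwp, hws⟩ := hseg m i hmi (by omega)
      have hdd := happend x hx p hp hcond m w hwp
        (fun y hy => by obtain ⟨j, _, hj2, hj3⟩ := hws y hy; exact ⟨j, by omega, hj3⟩)
      rw [SimpleGraph.dist_comm] at hle
      omega
    · obtain ⟨w, hwl, hwp, hws⟩ := hseg i m (by omega) hm
      have hwp' : w.reverse.IsPath := (SimpleGraph.Walk.isPath_reverse_iff w).2 hwp
      have hdd := happend x hx p hp hcond m w.reverse hwp'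
        (fun y hy => by
          rw [SimpleGraph.Walk.support_reverse, List.mem_reverse] at hy
          obtain ⟨j, _, hj2, hj3⟩ := hws y hy; exact ⟨j, by omega, hj3⟩)
      rw [SimpleGraph.Walk.length_reverse] at hdd
      rw [SimpleGraph.dist_comm] at hle
      omega
  have hS2 : ∀ x ∈ S, ∀ z ∈ S, x ≠ z → 2 ≤ G.dist x z := by
    intro x hx z hz hne
    have h0 : G.dist x z ≠ 0 := fun h => hne (hconn.dist_eq_zero_iff.1 h)
    have h1 : G.dist x z ≠ 1 := fun h =>
      hind x hx z hz hne (SimpleGraph.dist_eq_one_iff_adj.1 h)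
    omega
  -- the base-heard predicate and capped broadcast g0
  set B : V → Prop := fun y => G.dist (v 0) y ≤ i ∨ G.dist (v d) y ≤ d - i ∨
    ∃ x ∈ S, G.dist x y ≤ 1 with hBdef
  set g0 : V → ℕ := fun y => if y = v 0 then i else if y = v d then d - i else
    if y ∈ S then 1 else if B y then 0 else 1 with hg0def
  have hv0d : v 0 ≠ v d := fun h => by have := hinj 0 (by omega) d (by omega) h; omega
  have hv0S : v 0 ∉ S := fun h => hSnotpath _ h 0 (by omega) rfl
  have hvdS : v d ∉ S := fun h => hSnotpath _ h d le_rfl rfl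
  have hg0v0 : g0 (v 0) = i := by simp [hg0def]
  have hg0vd : g0 (v d) = d - i := by simp [hg0def, hv0d.symm]
  have hg0S : ∀ x ∈ S, g0 x = 1 := by
    intro x hx
    have h1 : x ≠ v 0 := fun h => hSnotpath x hx 0 (by omega) h.symm
    have h2 : x ≠ v d := fun h => hSnotpath x hx d le_rfl h.symm
    simp [hg0def, h1, h2, hx]
  have hg0other : ∀ z, z ≠ v 0 → z ≠ v d → z ∉ S → g0 z = if B z then 0 else 1 := by
    intro z h1 h2 h3
    simp [hg0def, h1, h2, h3]
  have hBv : ∀ m ≤ d, B (v m) := by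
    intro m hm
    rcases le_or_gt m i with h | h
    · left
      have := hdistv 0 m (by omega) hm
      omega
    · right; left
      have := hdistv m d (by omega) le_rfl
      rw [SimpleGraph.dist_comm]
      omega
  -- vertices close to the path which are unheard must be in the side tree T_i
  have hnear : ∀ z, z ∉ S → ∀ m ≤ d, G.dist z (v m) ≤ 1 → B z := by
    intro z hzS m hm hle
    by_cases hzm : z = v m
    · subst hzm; exact hBv m hm
    have h0 : G.dist z (v m) ≠ 0 := fun h => hzm (hconn.dist_eq_zero_iff.1 h)
    have h1 : G.dist z (v m) = 1 := by omega
    have hadj1 : G.Adj z (v m) := SimpleGraph.dist_eq_one_iff_adj.1 h1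
    have hzm' : G.dist (v m) z ≤ 1 := by rw [SimpleGraph.dist_comm]; exact hle
    rcases lt_trichotomy m i with hmi | hmi | hmi
    · left
      calc G.dist (v 0) z ≤ G.dist (v 0) (v m) + G.dist (v m) z := hconn.dist_triangle
        _ ≤ i := by rw [hdistv 0 m (by omega) hm]; omega
    · by_cases hzpath : ∃ j, j ≤ d ∧ v j = z
      · obtain ⟨j, hj, hjz⟩ := hzpath
        subst hjz
        rcases le_or_gt j m with hjm | hjm
        · have hjm1 := hdistv j m hjm hm
          left
          rw [hdistv 0 j (by omega) hj]
          omega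
        · have hjm1 := hdistv m j (by omega) hj
          right; left
          have e1 : G.dist (v d) (v j) = d - j := by
            rw [SimpleGraph.dist_comm]; exact hdistv j d (by omega) le_rfl
          omega
      · push_neg at hzpath
        have hadj2 : G.Adj z (v i) := by rw [← hmi]; exact hadj1
        have hzside : z ∈ sideTree G d v i := by
          refine ⟨SimpleGraph.Walk.cons hadj2 SimpleGraph.Walk.nil, ?_, ?_⟩
          · refine (SimpleGraph.Walk.cons_isPath_iff _ _).2 ⟨SimpleGraph.Walk.IsPath.nil, ?_⟩
            have hne' : z ≠ v i := by rw [← hmi]; exact hzm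
            simpa using hne'
          · intro y hy hyne j hj
            simp only [SimpleGraph.Walk.support_cons, List.mem_cons] at hy
            rcases hy with rfl | hy2
            · exact hzpath j hj
            · have : y = v i := by simpa using hy2
              exact absurd this hyne
        rcases hdom z hzside with hzS' | ⟨s, hs, hsadj⟩
        · exact absurd hzS' hzS
        · exact Or.inr (Or.inr ⟨s, hs, (SimpleGraph.dist_eq_one_iff_adj.2 hsadj).le⟩)
    · right; left
      have e1 : G.dist (v d) (v m) = d - m := by
        rw [SimpleGraph.dist_comm]; exact hdistv m d (by omega) le_rfl
      calc G.dist (v d) z ≤ G.dist (v d) (v m) + G.dist (v m) z := hconn.dist_triangle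
        _ ≤ d - i := by omega
  -- g0 is a dominating broadcast
  have heccv0 : d ≤ ecc G (v 0) := by
    have := dist_le_ecc G (v 0) (v d)
    rw [hdistv 0 d (by omega) le_rfl] at this
    omega
  have heccvd : d ≤ ecc G (v d) := by
    have := dist_le_ecc G (v d) (v 0)
    rw [SimpleGraph.dist_comm, hdistv 0 d (by omega) le_rfl] at this
    omega
  have hecc1 : ∀ y : V, y ≠ v 0 → 1 ≤ ecc G y := by
    intro y hy
    have h2 := dist_le_ecc G y (v 0)
    have h0 : G.dist y (v 0) ≠ 0 := fun h => hy (hconn.dist_eq_zero_iff.1 h)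
    omega
  have hg0brd : IsBroadcast G g0 := by
    intro y
    by_cases h1 : y = v 0
    · subst h1; rw [hg0v0]; omega
    by_cases h2 : y = v d
    · subst h2; rw [hg0vd]; omega
    by_cases h3 : y ∈ S
    · rw [hg0S y h3]; exact hecc1 y h1
    · rw [hg0other y h1 h2 h3]
      split
      · omega
      · exact hecc1 y h1
  have hg0dom : IsDomBroadcast G g0 := by
    refine ⟨hg0brd, fun u => ?_⟩
    by_cases hBu : B u
    · rcases hBu with h | h | ⟨x, hx, h⟩
      · exact ⟨v 0, by rw [hg0v0]; omega, by rw [hg0v0]; exact h⟩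
      · exact ⟨v d, by rw [hg0vd]; omega, by rw [hg0vd]; exact h⟩
      · exact ⟨x, by rw [hg0S x hx], by rw [hg0S x hx]; exact h⟩
    · have h1 : u ≠ v 0 := fun h => hBu (h ▸ hBv 0 (by omega))
      have h2 : u ≠ v d := fun h => hBu (h ▸ hBv d le_rfl)
      have h3 : u ∉ S := fun h => hBu (Or.inr (Or.inr ⟨u, h, by
        rw [SimpleGraph.dist_self]; omega⟩))
      refine ⟨u, ?_, ?_⟩
      · rw [hg0other u h1 h2 h3, if_neg hBu]
      · rw [SimpleGraph.dist_self]; omega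
  -- every dominating broadcast below g0 has cost at least d + 1
  have hforce : ∀ h : V → ℕ, h ≤ g0 → IsDomBroadcast G h → d + 1 ≤ cost h := by
    intro h hle hdomh
    have hxS : ∀ x ∈ S, h x = 1 := by
      intro x hx
      obtain ⟨z, hz1, hz2⟩ := hdomh.2 x
      have hzg : h z ≤ g0 z := hle z
      by_cases hz0 : z = v 0
      · subst hz0
        rw [hg0v0] at hzg
        have h9 := hdistS0 x hx
        omega
      by_cases hzd : z = v d
      · subst hzd
        rw [hg0vd] at hzg
        have := hdistSd x hx
        omega
      by_cases hzS : z ∈ S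
      · by_cases hzx : z = x
        · subst hzx
          rw [hg0S z hzS] at hzg
          omega
        · rw [hg0S z hzS] at hzg
          have := hS2 z hzS x hx hzx
          omega
      · rw [hg0other z hz0 hzd hzS] at hzg
        by_cases hBz : B z
        · rw [if_pos hBz] at hzg; omega
        · rw [if_neg hBz] at hzg
          exfalso
          exact hBz (Or.inr (Or.inr ⟨x, hx, by rw [SimpleGraph.dist_comm]; omega⟩))
    have hgap : ∀ m ≤ d, m ≠ i → m ≤ h (v 0) ∨ d - m ≤ h (v d) := by
      intro m hm hmi
      by_contra hcon
      push_neg at hcon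
      obtain ⟨hc1, hc2⟩ := hcon
      obtain ⟨z, hz1, hz2⟩ := hdomh.2 (v m)
      have hzg : h z ≤ g0 z := hle z
      by_cases hz0 : z = v 0
      · subst hz0
        rw [hdistv 0 m (by omega) hm] at hz2
        omega
      by_cases hzd : z = v d
      · subst hzd
        have : G.dist (v d) (v m) = d - m := by
          rw [SimpleGraph.dist_comm]; exact hdistv m d (by omega) le_rfl
        omega
      by_cases hzS : z ∈ S
      · rw [hg0S z hzS] at hzg
        have := hSfar z hzS m hm (by omega)
        exact hmi this
      · rw [hg0other z hz0 hzd hzS] at hzg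
        by_cases hBz : B z
        · rw [if_pos hBz] at hzg; omega
        · rw [if_neg hBz] at hzg
          exact hBz (hnear z hzS m hm (by omega))
    have hab : d ≤ h (v 0) + h (v d) + 2 := by
      by_contra hcon
      push_neg at hcon
      have e1 : h (v 0) + 1 = i := by
        by_contra hne
        rcases hgap (h (v 0) + 1) (by omega) hne with hh | hh <;> omega
      have e2 : h (v 0) + 2 = i := by
        by_contra hne
        rcases hgap (h (v 0) + 2) (by omega) hne with hh | hh <;> omega
      omega
    have hsum : h (v 0) + h (v d) + 3 ≤ cost h := by
      have hv0mem : v 0 ∉ insert (v d) S := by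
        simp only [Finset.mem_insert]
        push_neg
        exact ⟨hv0d, hv0S⟩
      have hsub1 : insert (v 0) (insert (v d) S) ⊆ Finset.univ := Finset.subset_univ _
      have hsS : ∑ x ∈ S, h x = 3 := by
        rw [Finset.sum_congr rfl (fun x hx => hxS x hx), Finset.sum_const, hcard]
        simp
      calc h (v 0) + h (v d) + 3
          = ∑ x ∈ insert (v 0) (insert (v d) S), h x := by
            rw [Finset.sum_insert hv0mem, Finset.sum_insert hvdS, hsS]
            ring
        _ ≤ ∑ x, h x := Finset.sum_le_sum_of_subset hsub1
        _ = cost h := rfl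
    omega
  -- extract a minimum-cost dominating broadcast below g0
  set Dn : Set ℕ := {n : ℕ | ∃ h : V → ℕ, h ≤ g0 ∧ IsDomBroadcast G h ∧ cost h = n}
    with hDndef
  have hne : Dn.Nonempty := ⟨cost g0, g0, le_rfl, hg0dom, rfl⟩
  obtain ⟨hstar, hstarle, hstardom, hstarcost⟩ := Nat.sInf_mem hne
  have hmin : IsMinDomBroadcast G hstar := by
    refine ⟨hstardom, fun f' hf' hdomf' => ?_⟩
    have hf'le : f' ≤ g0 := le_trans (le_of_lt hf') hstarle
    have hmem : cost f' ∈ Dn := ⟨f', hf'le, hdomf', rfl⟩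
    have hlt : cost f' < cost hstar := by
      obtain ⟨hle2, j, hj⟩ := Pi.lt_def.mp hf'
      exact Finset.sum_lt_sum (fun k _ => hle2 k) ⟨j, Finset.mem_univ j, hj⟩
    have := Nat.sInf_le hmem
    omega
  have hcost_ge : d + 1 ≤ cost hstar := hforce hstar hstarle hstardom
  have hbdd : BddAbove {n : ℕ | ∃ f : V → ℕ, IsMinDomBroadcast G f ∧ cost f = n} := by
    refine ⟨∑ y, ecc G y, ?_⟩
    rintro n ⟨f, hf, rfl⟩
    exact Finset.sum_le_sum fun y _ => hf.1.1 y
  have hmem2 : cost hstar ∈ {n : ℕ | ∃ f : V → ℕ, IsMinDomBroadcast G f ∧ cost f = n} :=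
    ⟨hstar, hmin, rfl⟩
  have hfin : cost hstar ≤ upperBroadcastNum G := le_csSup hbdd hmem2
  rw [hdiam]
  omega
end AJC
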